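/- Let N = 2m be even, let H₁, …, H_N be d×d complex Hermitian matrices, let ψ₀ ∈ ℂ^d be a unit vector, and for ε ∈ ℝ^N define ψ(ε) = exp(−i(1+ε₁)H₁)···exp(−i(1+ε_N)H_N)·ψ₀, with ideal state ψ̂ = ψ(0). Then for any ε̄ ≥ 0 and any ε ∈ ℝ^N with ‖ε‖_∞ ≤ ε̄: |⟨ψ(ε), ψ̂⟩| ≥ 1 − (Σ_{i=1}^{m} ‖[H_{2i−1} H_{2i}]‖₂)²·ε̄². -/

import Mathlib

set_option autoImplicit false
set_option maxHeartbeats 1600000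

open scoped Matrix

/-- The operator norm (induced 2-norm, i.e. maximum singular value) of a complex matrix. -/
noncomputable def opNorm {m n : Type*} [Fintype m] [Fintype n] [DecidableEq n]
    (A : Matrix m n ℂ) : ℝ :=
  ‖LinearMap.toContinuousLinearMap (Matrix.toEuclideanLin A)‖

/-- The noisy circuit state `ψ(ε) = exp(−i(1+ε₁)H₁) ⋯ exp(−i(1+ε_N)H_N) ψ₀`
(ordered matrix product applied to `ψ₀`). -/
noncomputable def circuitState {d N : ℕ} (H : Fin N → Matrix (Fin d) (Fin d) ℂ)
    (ψ₀ : EuclideanSpace ℂ (Fin d)) (ε : Fin N → ℝ) : EuclideanSpace ℂ (Fin d) :=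
  Matrix.toEuclideanLin
    (List.ofFn fun i => NormedSpace.exp ((-Complex.I * (1 + (ε i : ℂ))) • H i)).prod ψ₀

section Aux

open scoped Matrix.Norms.L2Operator
open NormedSpace

variable {d : ℕ}

noncomputable instance : CompleteSpace (Matrix (Fin d) (Fin d) ℂ) :=
  FiniteDimensional.complete ℂ _

/-- `exp(-i c • A)` for a real scalar `c`. -/
noncomputable def eH (c : ℝ) (A : Matrix (Fin d) (Fin d) ℂ) : Matrix (Fin d) (Fin d) ℂ :=
  NormedSpace.exp ((-Complex.I * (c : ℂ)) • A)

lemma real_smul_eq (t c : ℝ) (A : Matrix (Fin d) (Fin d) ℂ) :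
    t • ((-Complex.I * (c : ℂ)) • A) = (-Complex.I * ((t * c : ℝ) : ℂ)) • A := by
  rw [← smul_assoc]
  congr 1
  rw [Complex.real_smul]
  push_cast
  ring

lemma star_smul_herm {A : Matrix (Fin d) (Fin d) ℂ} (hA : A.IsHermitian) (c : ℝ) :
    star ((-Complex.I * (c : ℂ)) • A) = -((-Complex.I * (c : ℂ)) • A) := by
  rw [star_smul, Matrix.star_eq_conjTranspose, hA.eq, ← neg_smul]
  congr 1
  simp [Complex.ext_iff]

lemma eH_unitary {A : Matrix (Fin d) (Fin d) ℂ} (hA : A.IsHermitian) (c : ℝ) :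
    eH c A ∈ unitary (Matrix (Fin d) (Fin d) ℂ) := by
  have hstar : star (eH c A) = exp (-((-Complex.I * (c : ℂ)) • A)) := by
    rw [eH, star_exp, star_smul_herm hA]
  have h1 : exp (-((-Complex.I * (c : ℂ)) • A)) * exp ((-Complex.I * (c : ℂ)) • A) = 1 := by
    rw [← Matrix.exp_add_of_commute (-((-Complex.I * (c : ℂ)) • A)) ((-Complex.I * (c : ℂ)) • A)
      (Commute.refl _).neg_left, neg_add_cancel, exp_zero]
  have h2 : exp ((-Complex.I * (c : ℂ)) • A) * exp (-((-Complex.I * (c : ℂ)) • A)) = 1 := by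
    rw [← Matrix.exp_add_of_commute ((-Complex.I * (c : ℂ)) • A) (-((-Complex.I * (c : ℂ)) • A))
      (Commute.refl _).neg_right, add_neg_cancel, exp_zero]
  exact Unitary.mem_iff.mpr ⟨by rw [hstar]; exact h1, by rw [hstar]; exact h2⟩

lemma eH_norm (hd : 0 < d) {A : Matrix (Fin d) (Fin d) ℂ} (hA : A.IsHermitian) (c : ℝ) :
    ‖eH c A‖ = 1 := by
  haveI : Nonempty (Fin d) := ⟨⟨0, hd⟩⟩
  exact CStarRing.norm_of_mem_unitary (eH_unitary hA c)

lemma key_block (H₁ H₂ : Matrix (Fin d) (Fin d) ℂ) (e₁ e₂ : ℝ) :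
    ‖(e₁ : ℂ) • H₁ + (e₂ : ℂ) • H₂‖ ≤
      Real.sqrt (e₁ ^ 2 + e₂ ^ 2) * ‖Matrix.fromCols H₁ H₂‖ := by
  rw [Matrix.l2_opNorm_def]
  refine ContinuousLinearMap.opNorm_le_bound _
    (mul_nonneg (Real.sqrt_nonneg _) (norm_nonneg _)) fun x => ?_
  set y : EuclideanSpace ℂ (Fin d ⊕ Fin d) :=
    (WithLp.equiv 2 _).symm
      (Sum.elim ((e₁ : ℂ) • (WithLp.equiv 2 _ x)) ((e₂ : ℂ) • (WithLp.equiv 2 _ x))) with hy_def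
  have h1 : Matrix.toEuclideanLin ((e₁ : ℂ) • H₁ + (e₂ : ℂ) • H₂) x
      = Matrix.toEuclideanLin (Matrix.fromCols H₁ H₂) y := by
    rw [Matrix.toEuclideanLin_apply, Matrix.toEuclideanLin_apply]
    congr 1
    rw [hy_def, WithLp.equiv_symm_apply, WithLp.ofLp_toLp, Matrix.fromCols_mulVec_sumElim]
    rw [Matrix.add_mulVec, Matrix.smul_mulVec, Matrix.smul_mulVec,
      Matrix.mulVec_smul, Matrix.mulVec_smul]
    rfl
  have hy : ‖y‖ = Real.sqrt (e₁ ^ 2 + e₂ ^ 2) * ‖x‖ := by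
    rw [EuclideanSpace.norm_eq, EuclideanSpace.norm_eq, ← Real.sqrt_mul (by positivity)]
    congr 1
    rw [Fintype.sum_sum_type]
    have hl : ∀ i : Fin d, ‖y (Sum.inl i)‖ ^ 2 = e₁ ^ 2 * ‖x i‖ ^ 2 := by
      intro i
      show ‖(e₁ : ℂ) * (x i)‖ ^ 2 = _
      rw [norm_mul, mul_pow, Complex.norm_real, Real.norm_eq_abs, sq_abs]
    have hr : ∀ i : Fin d, ‖y (Sum.inr i)‖ ^ 2 = e₂ ^ 2 * ‖x i‖ ^ 2 := by
      intro i
      show ‖(e₂ : ℂ) * (x i)‖ ^ 2 = _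
      rw [norm_mul, mul_pow, Complex.norm_real, Real.norm_eq_abs, sq_abs]
    simp only [hl, hr, ← Finset.mul_sum, ← Finset.sum_add_distrib]
    ring
  calc ‖(Matrix.toEuclideanLin.trans LinearMap.toContinuousLinearMap
          ((e₁ : ℂ) • H₁ + (e₂ : ℂ) • H₂)) x‖
      = ‖(Matrix.toEuclideanLin.trans LinearMap.toContinuousLinearMap
          (Matrix.fromCols H₁ H₂)) y‖ := congrArg norm h1
    _ ≤ ‖Matrix.fromCols H₁ H₂‖ * ‖y‖ :=
        (Matrix.toEuclideanLin.trans LinearMap.toContinuousLinearMap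
          (Matrix.fromCols H₁ H₂)).le_opNorm y
    _ = Real.sqrt (e₁ ^ 2 + e₂ ^ 2) * ‖Matrix.fromCols H₁ H₂‖ * ‖x‖ := by
        rw [hy]; ring

lemma pair_diff (hd : 0 < d) {H₁ H₂ : Matrix (Fin d) (Fin d) ℂ}
    (h₁ : H₁.IsHermitian) (h₂ : H₂.IsHermitian) (e₁ e₂ : ℝ) :
    ‖eH (1 + e₁) H₁ * eH (1 + e₂) H₂ - eH 1 H₁ * eH 1 H₂‖ ≤
      Real.sqrt (e₁ ^ 2 + e₂ ^ 2) * ‖Matrix.fromCols H₁ H₂‖ := by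
  haveI : Nonempty (Fin d) := ⟨⟨0, hd⟩⟩
  have hsplit1 : eH (1 + e₁) H₁ = eH 1 H₁ * eH e₁ H₁ := by
    rw [eH, eH, eH, ← Matrix.exp_add_of_commute _ _ (((Commute.refl H₁).smul_left _).smul_right _),
      ← add_smul]
    congr 2
    push_cast
    ring
  have hsplit2 : eH (1 + e₂) H₂ = eH e₂ H₂ * eH 1 H₂ := by
    rw [eH, eH, eH, ← Matrix.exp_add_of_commute _ _ (((Commute.refl H₂).smul_left _).smul_right _),
      ← add_smul]
    congr 2
    push_cast
    ring
  have key : eH (1 + e₁) H₁ * eH (1 + e₂) H₂ - eH 1 H₁ * eH 1 H₂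
      = eH 1 H₁ * ((eH e₁ H₁ * eH e₂ H₂ - 1) * eH 1 H₂) := by
    rw [hsplit1, hsplit2]
    noncomm_ring
  have hD : ‖eH e₁ H₁ * eH e₂ H₂ - 1‖ ≤ ‖(e₁ : ℂ) • H₁ + (e₂ : ℂ) • H₂‖ := by
    set X := (-Complex.I * (e₁ : ℂ)) • H₁ with hX
    set Y := (-Complex.I * (e₂ : ℂ)) • H₂ with hY
    set f : ℝ → Matrix (Fin d) (Fin d) ℂ := fun u => exp (u • X) * exp (u • Y) with hf_def
    have hexp_eq : (exp : Matrix (Fin d) (Fin d) ℂ → _) = exp := rfl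
    have hf : ∀ t ∈ Set.Icc (0:ℝ) 1,
        HasDerivWithinAt f (exp (t • X) * ((X + Y) * exp (t • Y))) (Set.Icc (0:ℝ) 1) t := by
      intro t _
      have h := (hasDerivAt_exp_smul_const (𝕂 := ℝ) X t).mul
        (hasDerivAt_exp_smul_const' (𝕂 := ℝ) Y t)
      have : exp (t • X) * X * exp (t • Y) + exp (t • X) * (Y * exp (t • Y))
          = exp (t • X) * ((X + Y) * exp (t • Y)) := by noncomm_ring
      rw [this] at h
      exact h.hasDerivWithinAt
    have hnorm_exp : ∀ (t c : ℝ) (A : Matrix (Fin d) (Fin d) ℂ), A.IsHermitian →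
        ‖exp (t • ((-Complex.I * (c : ℂ)) • A))‖ = 1 := by
      intro t c A hA
      rw [hexp_eq, real_smul_eq]
      exact eH_norm hd hA _
    have hbound : ∀ t ∈ Set.Ico (0:ℝ) 1,
        ‖exp (t • X) * ((X + Y) * exp (t • Y))‖ ≤ ‖(e₁ : ℂ) • H₁ + (e₂ : ℂ) • H₂‖ := by
      intro t _
      have hXY : X + Y = (-Complex.I) • ((e₁ : ℂ) • H₁ + (e₂ : ℂ) • H₂) := by
        rw [smul_add, hX, hY, ← smul_assoc, ← smul_assoc]
        norm_num [smul_eq_mul]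
      calc ‖exp (t • X) * ((X + Y) * exp (t • Y))‖
          ≤ ‖exp (t • X)‖ * (‖X + Y‖ * ‖exp (t • Y)‖) :=
            (norm_mul_le _ _).trans
              (mul_le_mul_of_nonneg_left (norm_mul_le _ _) (norm_nonneg _))
        _ = ‖X + Y‖ := by rw [hnorm_exp t e₁ H₁ h₁, hnorm_exp t e₂ H₂ h₂]; ring
        _ = ‖(e₁ : ℂ) • H₁ + (e₂ : ℂ) • H₂‖ := by
            rw [hXY, norm_smul]
            simp
    have h01 := norm_image_sub_le_of_norm_deriv_le_segment_01' hf hbound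
    have hf1 : f 1 = eH e₁ H₁ * eH e₂ H₂ := by
      rw [hf_def]
      simp only [one_smul]
      rw [hexp_eq]
      rfl
    have hf0 : f 0 = 1 := by
      rw [hf_def]
      simp only [zero_smul]
      rw [hexp_eq, exp_zero, one_mul]
    rwa [hf1, hf0] at h01
  rw [key]
  have n1 : ‖eH 1 H₁‖ = 1 := eH_norm hd h₁ 1
  have n2 : ‖eH 1 H₂‖ = 1 := eH_norm hd h₂ 1
  calc ‖eH 1 H₁ * ((eH e₁ H₁ * eH e₂ H₂ - 1) * eH 1 H₂)‖
      ≤ ‖eH 1 H₁‖ * (‖eH e₁ H₁ * eH e₂ H₂ - 1‖ * ‖eH 1 H₂‖) :=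
        (norm_mul_le _ _).trans
          (mul_le_mul_of_nonneg_left (norm_mul_le _ _) (norm_nonneg _))
    _ = ‖eH e₁ H₁ * eH e₂ H₂ - 1‖ := by rw [n1, n2]; ring
    _ ≤ ‖(e₁ : ℂ) • H₁ + (e₂ : ℂ) • H₂‖ := hD
    _ ≤ Real.sqrt (e₁ ^ 2 + e₂ ^ 2) * ‖Matrix.fromCols H₁ H₂‖ := key_block H₁ H₂ e₁ e₂

lemma norm_list_prod_le_one (h1 : ‖(1 : Matrix (Fin d) (Fin d) ℂ)‖ ≤ 1)
    (l : List (Matrix (Fin d) (Fin d) ℂ)) (h : ∀ x ∈ l, ‖x‖ ≤ 1) : ‖l.prod‖ ≤ 1 := by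
  induction l with
  | nil => simpa using h1
  | cons a l ih =>
    rw [List.prod_cons]
    calc ‖a * l.prod‖ ≤ ‖a‖ * ‖l.prod‖ := norm_mul_le _ _
      _ ≤ 1 * 1 := by
          have := h a (List.mem_cons_self)
          have := ih fun x hx => h x (List.mem_cons_of_mem a hx)
          exact mul_le_mul ‹‖a‖ ≤ 1› ‹_› (norm_nonneg _) zero_le_one
      _ = 1 := one_mul 1

lemma telescope (h1 : ‖(1 : Matrix (Fin d) (Fin d) ℂ)‖ ≤ 1)
    (A B : ℕ → Matrix (Fin d) (Fin d) ℂ)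
    (hA : ∀ n, ‖A n‖ ≤ 1) (hB : ∀ n, ‖B n‖ ≤ 1) (m : ℕ) :
    ‖((List.range (2 * m)).map A).prod - ((List.range (2 * m)).map B).prod‖ ≤
      ∑ i ∈ Finset.range m, ‖A (2 * i) * A (2 * i + 1) - B (2 * i) * B (2 * i + 1)‖ := by
  induction m with
  | zero => simp
  | succ m ih =>
    have h2 : 2 * (m + 1) = (2 * m + 1) + 1 := by ring
    have hprod : ∀ C : ℕ → Matrix (Fin d) (Fin d) ℂ,
        ((List.range (2 * (m + 1))).map C).prod
          = ((List.range (2 * m)).map C).prod * (C (2 * m) * C (2 * m + 1)) := by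
      intro C
      rw [h2, List.range_succ, List.range_succ]
      simp [mul_assoc]
    rw [hprod A, hprod B]
    set X := ((List.range (2 * m)).map A).prod
    set Y := ((List.range (2 * m)).map B).prod
    set a := A (2 * m) * A (2 * m + 1)
    set b := B (2 * m) * B (2 * m + 1)
    have hX : ‖X‖ ≤ 1 := by
      apply norm_list_prod_le_one h1
      intro x hx
      obtain ⟨n, -, rfl⟩ := List.mem_map.mp hx
      exact hA n
    have hb : ‖b‖ ≤ 1 := by
      calc ‖b‖ ≤ ‖B (2 * m)‖ * ‖B (2 * m + 1)‖ := norm_mul_le _ _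
        _ ≤ 1 * 1 := mul_le_mul (hB _) (hB _) (norm_nonneg _) zero_le_one
        _ = 1 := one_mul 1
    have hsplit : X * a - Y * b = X * (a - b) + (X - Y) * b := by noncomm_ring
    rw [hsplit, Finset.sum_range_succ]
    calc ‖X * (a - b) + (X - Y) * b‖ ≤ ‖X * (a - b)‖ + ‖(X - Y) * b‖ := norm_add_le _ _
      _ ≤ ‖X‖ * ‖a - b‖ + ‖X - Y‖ * ‖b‖ := add_le_add (norm_mul_le _ _) (norm_mul_le _ _)
      _ ≤ 1 * ‖a - b‖ + ‖X - Y‖ * 1 := by gcongr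
      _ = ‖X - Y‖ + ‖a - b‖ := by ring
      _ ≤ (∑ i ∈ Finset.range m, ‖A (2 * i) * A (2 * i + 1) - B (2 * i) * B (2 * i + 1)‖)
            + ‖a - b‖ := by gcongr

lemma opNorm_eq_l2 {n : Type*} [Fintype n] [DecidableEq n]
    (A : Matrix (Fin d) n ℂ) : opNorm A = ‖A‖ := rfl

lemma toEuclideanLin_norm_le (M : Matrix (Fin d) (Fin d) ℂ) (x : EuclideanSpace ℂ (Fin d)) :
    ‖Matrix.toEuclideanLin M x‖ ≤ ‖M‖ * ‖x‖ :=
  (Matrix.toEuclideanLin.trans LinearMap.toContinuousLinearMap M).le_opNorm x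

lemma unitary_apply_norm {U : Matrix (Fin d) (Fin d) ℂ}
    (hU : U ∈ unitary (Matrix (Fin d) (Fin d) ℂ)) (x : EuclideanSpace ℂ (Fin d)) :
    ‖Matrix.toEuclideanLin U x‖ = ‖x‖ := by
  have hT : Matrix.toEuclideanLin U x = Matrix.toEuclideanCLM (𝕜 := ℂ) U x := by
    rw [← Matrix.coe_toEuclideanCLM_eq_toEuclideanLin]
    rfl
  have hadj : ContinuousLinearMap.adjoint (Matrix.toEuclideanCLM (𝕜 := ℂ) U)
      (Matrix.toEuclideanCLM (𝕜 := ℂ) U x) = x := by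
    rw [← ContinuousLinearMap.star_eq_adjoint, ← map_star, ← ContinuousLinearMap.mul_apply,
      ← map_mul, (Unitary.mem_iff.mp hU).1, map_one, ContinuousLinearMap.one_apply]
  have key : (inner ℂ (Matrix.toEuclideanCLM (𝕜 := ℂ) U x)
      (Matrix.toEuclideanCLM (𝕜 := ℂ) U x) : ℂ) = (inner ℂ x x : ℂ) := by
    rw [← ContinuousLinearMap.adjoint_inner_right, hadj]
  have hre := congrArg Complex.re key
  rw [← RCLike.re_to_complex, ← RCLike.re_to_complex, inner_self_eq_norm_sq,
    inner_self_eq_norm_sq] at hre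
  rw [hT, ← Real.sqrt_sq (norm_nonneg (Matrix.toEuclideanCLM (𝕜 := ℂ) U x)), hre,
    Real.sqrt_sq (norm_nonneg x)]

end Aux

section MainProof

open scoped Matrix.Norms.L2Operator
open NormedSpace

/-- pair-wise worst-case fidelity bound, even N: for `N = 2m`, any `ε̄ ≥ 0`
and any `ε` with `‖ε‖_∞ ≤ ε̄`, the fidelity between the noisy state `ψ(ε)` and the ideal
state `ψ̂ = ψ(0)` satisfies `|⟨ψ(ε), ψ̂⟩| ≥ 1 − (Σ_{i=1}^{m} ‖[H_{2i−1} H_{2i}]‖₂)²·ε̄².` -/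
theorem pairwise_worst_case_fidelity_even {d m N : ℕ} (hN : N = 2 * m)
    (H : Fin N → Matrix (Fin d) (Fin d) ℂ) (hH : ∀ i, (H i).IsHermitian)
    (ψ₀ : EuclideanSpace ℂ (Fin d)) (hψ₀ : ‖ψ₀‖ = 1)
    (εbar : ℝ) (hεbar : 0 ≤ εbar) (ε : Fin N → ℝ) (hε : ‖ε‖ ≤ εbar) :
    1 - (∑ i : Fin m, opNorm (Matrix.fromCols
          (H ⟨2 * (i : ℕ), by have := i.isLt; omega⟩)
          (H ⟨2 * (i : ℕ) + 1, by have := i.isLt; omega⟩))) ^ 2 * εbar ^ 2 ≤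
      ‖(inner ℂ (circuitState H ψ₀ ε) (circuitState H ψ₀ 0) : ℂ)‖ := by
  subst hN
  rcases Nat.eq_zero_or_pos d with hd0 | hd
  · exfalso
    have hz : ψ₀ = 0 := by
      subst hd0
      exact Subsingleton.elim _ _
    rw [hz, norm_zero] at hψ₀
    exact one_ne_zero hψ₀.symm
  haveI : Nonempty (Fin d) := ⟨⟨0, hd⟩⟩
  have hone : ‖(1 : Matrix (Fin d) (Fin d) ℂ)‖ ≤ 1 := le_of_eq CStarRing.norm_one
  set A' : ℕ → Matrix (Fin d) (Fin d) ℂ :=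
    fun n => if h : n < 2 * m then eH (1 + ε ⟨n, h⟩) (H ⟨n, h⟩) else 1 with hA'def
  set B' : ℕ → Matrix (Fin d) (Fin d) ℂ :=
    fun n => if h : n < 2 * m then eH 1 (H ⟨n, h⟩) else 1 with hB'def
  have hA'mem : ∀ n, A' n ∈ unitary (Matrix (Fin d) (Fin d) ℂ) := by
    intro n
    rw [hA'def]
    dsimp only
    split
    · exact eH_unitary (hH _) _
    · exact one_mem _
  have hB'mem : ∀ n, B' n ∈ unitary (Matrix (Fin d) (Fin d) ℂ) := by
    intro n
    rw [hB'def]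
    dsimp only
    split
    · exact eH_unitary (hH _) _
    · exact one_mem _
  have hA'n : ∀ n, ‖A' n‖ ≤ 1 := fun n => le_of_eq (CStarRing.norm_of_mem_unitary (hA'mem n))
  have hB'n : ∀ n, ‖B' n‖ ≤ 1 := fun n => le_of_eq (CStarRing.norm_of_mem_unitary (hB'mem n))
  have hlistε : (List.range (2 * m)).map A'
      = List.ofFn (fun i : Fin (2 * m) =>
          NormedSpace.exp ((-Complex.I * (1 + (ε i : ℂ))) • H i)) := by
    rw [List.ofFn_eq_map, ← (List.ext_getElem (by simp) (by simp) :
      (List.finRange (2 * m)).map Fin.val = List.range (2 * m)), List.map_map]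
    congr 1
    funext i
    show A' i.val = _
    rw [hA'def]
    dsimp only
    rw [dif_pos i.isLt]
    simp only [Fin.eta]
    rw [eH]
    have hcast : ((1 + ε i : ℝ) : ℂ) = 1 + (ε i : ℂ) := by push_cast; ring
    rw [hcast]
  have hlist0 : (List.range (2 * m)).map B'
      = List.ofFn (fun i : Fin (2 * m) =>
          NormedSpace.exp ((-Complex.I * (1 + ((0 : Fin (2 * m) → ℝ) i : ℂ))) • H i)) := by
    rw [List.ofFn_eq_map, ← (List.ext_getElem (by simp) (by simp) :
      (List.finRange (2 * m)).map Fin.val = List.range (2 * m)), List.map_map]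
    congr 1
    funext i
    show B' i.val = _
    rw [hB'def]
    dsimp only
    rw [dif_pos i.isLt]
    simp only [Fin.eta]
    rw [eH]
    have hcast : (-Complex.I * ((1 : ℝ) : ℂ)) = -Complex.I * (1 + ((0 : Fin (2 * m) → ℝ) i : ℂ)) := by
      simp
    rw [hcast]
  have hcsε : circuitState H ψ₀ ε
      = Matrix.toEuclideanLin ((List.range (2 * m)).map A').prod ψ₀ := by
    rw [hlistε]
    rfl
  have hcs0 : circuitState H ψ₀ 0
      = Matrix.toEuclideanLin ((List.range (2 * m)).map B').prod ψ₀ := by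
    rw [hlist0]
    rfl
  have hUεmem : ((List.range (2 * m)).map A').prod ∈ unitary (Matrix (Fin d) (Fin d) ℂ) := by
    refine Submonoid.list_prod_mem _ fun x hx => ?_
    obtain ⟨n, -, rfl⟩ := List.mem_map.mp hx
    exact hA'mem n
  have hU0mem : ((List.range (2 * m)).map B').prod ∈ unitary (Matrix (Fin d) (Fin d) ℂ) := by
    refine Submonoid.list_prod_mem _ fun x hx => ?_
    obtain ⟨n, -, rfl⟩ := List.mem_map.mp hx
    exact hB'mem n
  have hψε : ‖circuitState H ψ₀ ε‖ = 1 := by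
    rw [hcsε, unitary_apply_norm hUεmem, hψ₀]
  have hψ0' : ‖circuitState H ψ₀ 0‖ = 1 := by
    rw [hcs0, unitary_apply_norm hU0mem, hψ₀]
  set S := ∑ i : Fin m, opNorm (Matrix.fromCols
          (H ⟨2 * (i : ℕ), by have := i.isLt; omega⟩)
          (H ⟨2 * (i : ℕ) + 1, by have := i.isLt; omega⟩)) with hSdef
  have hS0 : 0 ≤ S := by
    rw [hSdef]
    exact Finset.sum_nonneg fun i _ => by rw [opNorm_eq_l2]; exact norm_nonneg _
  have hdiff : ‖((List.range (2 * m)).map A').prod - ((List.range (2 * m)).map B').prod‖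
      ≤ Real.sqrt 2 * εbar * S := by
    refine (telescope hone A' B' hA'n hB'n m).trans ?_
    have hconv : ∑ i ∈ Finset.range m, ‖A' (2 * i) * A' (2 * i + 1) - B' (2 * i) * B' (2 * i + 1)‖
        = ∑ i : Fin m,
            ‖A' (2 * (i : ℕ)) * A' (2 * (i : ℕ) + 1) - B' (2 * (i : ℕ)) * B' (2 * (i : ℕ) + 1)‖ :=
      (Fin.sum_univ_eq_sum_range _ m).symm
    rw [hconv, hSdef, Finset.mul_sum]
    refine Finset.sum_le_sum fun i _ => ?_
    have h1 : 2 * (i : ℕ) < 2 * m := by have := i.isLt; omega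
    have h2 : 2 * (i : ℕ) + 1 < 2 * m := by have := i.isLt; omega
    have hA1 : A' (2 * (i : ℕ)) = eH (1 + ε ⟨2 * (i : ℕ), h1⟩) (H ⟨2 * (i : ℕ), h1⟩) := by
      rw [hA'def]; dsimp only; rw [dif_pos h1]
    have hA2 : A' (2 * (i : ℕ) + 1)
        = eH (1 + ε ⟨2 * (i : ℕ) + 1, h2⟩) (H ⟨2 * (i : ℕ) + 1, h2⟩) := by
      rw [hA'def]; dsimp only; rw [dif_pos h2]
    have hB1 : B' (2 * (i : ℕ)) = eH 1 (H ⟨2 * (i : ℕ), h1⟩) := by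
      rw [hB'def]; dsimp only; rw [dif_pos h1]
    have hB2 : B' (2 * (i : ℕ) + 1) = eH 1 (H ⟨2 * (i : ℕ) + 1, h2⟩) := by
      rw [hB'def]; dsimp only; rw [dif_pos h2]
    rw [hA1, hA2, hB1, hB2, opNorm_eq_l2]
    refine (pair_diff hd (hH _) (hH _) _ _).trans ?_
    refine mul_le_mul_of_nonneg_right ?_
      (norm_nonneg (Matrix.fromCols (H ⟨2 * (i : ℕ), h1⟩) (H ⟨2 * (i : ℕ) + 1, h2⟩)))
    have hj1 : |ε ⟨2 * (i : ℕ), h1⟩| ≤ εbar := by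
      have := norm_le_pi_norm ε ⟨2 * (i : ℕ), h1⟩
      rw [Real.norm_eq_abs] at this
      exact this.trans hε
    have hj2 : |ε ⟨2 * (i : ℕ) + 1, h2⟩| ≤ εbar := by
      have := norm_le_pi_norm ε ⟨2 * (i : ℕ) + 1, h2⟩
      rw [Real.norm_eq_abs] at this
      exact this.trans hε
    have hsum : (ε ⟨2 * (i : ℕ), h1⟩) ^ 2 + (ε ⟨2 * (i : ℕ) + 1, h2⟩) ^ 2 ≤ 2 * εbar ^ 2 := by
      nlinarith [sq_abs (ε ⟨2 * (i : ℕ), h1⟩), sq_abs (ε ⟨2 * (i : ℕ) + 1, h2⟩),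
        abs_nonneg (ε ⟨2 * (i : ℕ), h1⟩), abs_nonneg (ε ⟨2 * (i : ℕ) + 1, h2⟩)]
    calc Real.sqrt ((ε ⟨2 * (i : ℕ), h1⟩) ^ 2 + (ε ⟨2 * (i : ℕ) + 1, h2⟩) ^ 2)
        ≤ Real.sqrt (2 * εbar ^ 2) := Real.sqrt_le_sqrt hsum
      _ = Real.sqrt 2 * εbar := by
          rw [Real.sqrt_mul (by norm_num), Real.sqrt_sq hεbar]
  have hvec : ‖circuitState H ψ₀ ε - circuitState H ψ₀ 0‖ ≤ Real.sqrt 2 * εbar * S := by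
    rw [hcsε, hcs0, ← LinearMap.sub_apply, ← map_sub]
    calc ‖Matrix.toEuclideanLin
          (((List.range (2 * m)).map A').prod - ((List.range (2 * m)).map B').prod) ψ₀‖
        ≤ ‖((List.range (2 * m)).map A').prod - ((List.range (2 * m)).map B').prod‖ * ‖ψ₀‖ :=
          toEuclideanLin_norm_le _ _
      _ = ‖((List.range (2 * m)).map A').prod - ((List.range (2 * m)).map B').prod‖ := by
          rw [hψ₀, mul_one]
      _ ≤ Real.sqrt 2 * εbar * S := hdiff
  have hnss := norm_sub_sq (𝕜 := ℂ) (circuitState H ψ₀ ε) (circuitState H ψ₀ 0)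
  rw [hψε, hψ0'] at hnss
  have hsq : ‖circuitState H ψ₀ ε - circuitState H ψ₀ 0‖ ^ 2 ≤ 2 * (εbar ^ 2 * S ^ 2) := by
    calc ‖circuitState H ψ₀ ε - circuitState H ψ₀ 0‖ ^ 2
        ≤ (Real.sqrt 2 * εbar * S) ^ 2 := by
          have h0 : (0 : ℝ) ≤ ‖circuitState H ψ₀ ε - circuitState H ψ₀ 0‖ := norm_nonneg _
          nlinarith [hvec]
      _ = 2 * (εbar ^ 2 * S ^ 2) := by
          rw [mul_pow, mul_pow, Real.sq_sqrt (by norm_num : (0:ℝ) ≤ 2)]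
          ring
  have hre : 1 - S ^ 2 * εbar ^ 2 ≤
      RCLike.re (inner ℂ (circuitState H ψ₀ ε) (circuitState H ψ₀ 0) : ℂ) := by
    nlinarith [hnss, hsq]
  calc 1 - S ^ 2 * εbar ^ 2
      ≤ RCLike.re (inner ℂ (circuitState H ψ₀ ε) (circuitState H ψ₀ 0) : ℂ) := hre
    _ = (inner ℂ (circuitState H ψ₀ ε) (circuitState H ψ₀ 0) : ℂ).re := rfl
    _ ≤ ‖(inner ℂ (circuitState H ψ₀ ε) (circuitState H ψ₀ 0) : ℂ)‖ :=
        Complex.re_le_norm _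

end MainProof
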